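/- Let 0 ≤ k < n and let ν be a (not necessarily strict) partition which, as a straight shape, is balanced with height and width both equal to k. Set λ := δ_n + ν. Then the distributive lattice [∅, λ]_shift = J(P_λ^shift) is tCDE, i.e. E(μ; ddeg) = (n + 1 + k)/4 for every toggle-symmetric distribution μ on J(P_λ^shift); in particular its edge density E(uni; ddeg) equals (n + 1 + k)/4. -/

import Mathlib

open scoped Classical

noncomputable section

namespace CDEPaper

/-- The down-degree of `p`: the number of elements that `p` covers, as a real number. -/
def ddeg {α : Type*} [PartialOrder α] (p : α) : ℝ :=
  (Nat.card {q : α // q ⋖ p} : ℝ)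

/-- The expectation of the statistic `f` with respect to the weights `μ`. -/
def expect {α : Type*} (μ : α → ℝ) (f : α → ℝ) : ℝ :=
  ∑ᶠ p, μ p * f p

/-- The uniform distribution on a finite type. -/
def uni (α : Type*) : α → ℝ :=
  fun _ => (Nat.card α : ℝ)⁻¹

/-- `μ` is a probability distribution. -/
def IsProbDist {α : Type*} (μ : α → ℝ) : Prop :=
  (∀ x, 0 ≤ μ x) ∧ (∑ᶠ x, μ x) = 1

/-- The `k`-chain distribution: each `p` gets probability proportional to the number of
`k`-chains (strictly increasing sequences `c₀ < c₁ < ⋯ < c_k`) passing through `p`. -/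
def chainDist (α : Type*) [PartialOrder α] (k : ℕ) : α → ℝ := fun p =>
  (Nat.card {c : Fin (k + 1) → α // StrictMono c ∧ ∃ i, c i = p} : ℝ) /
    (((k : ℝ) + 1) * (Nat.card {c : Fin (k + 1) → α // StrictMono c} : ℝ))

/-- The `m`-multichain distribution: each `p` gets probability proportional to the number of
`m`-multichains (weakly increasing sequences) passing through `p`. -/
def mchainDist (α : Type*) [PartialOrder α] (m : ℕ) : α → ℝ := fun p =>
  (Nat.card {c : Fin (m + 1) → α // Monotone c ∧ ∃ i, c i = p} : ℝ) /
    (Nat.card {cq : (Fin (m + 1) → α) × α // Monotone cq.1 ∧ ∃ i, cq.1 i = cq.2} : ℝ)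

/-- The modified `m`-multichain distribution: each `p` gets probability proportional to the
number of pairs `(c, i)` where `c` is an `m`-multichain and `c i = p`. -/
def mhatDist (α : Type*) [PartialOrder α] (m : ℕ) : α → ℝ := fun p =>
  (Nat.card {ci : (Fin (m + 1) → α) × Fin (m + 1) // Monotone ci.1 ∧ ci.1 ci.2 = p} : ℝ) /
    (((m : ℝ) + 1) * (Nat.card {c : Fin (m + 1) → α // Monotone c} : ℝ))

/-- The maximal chain distribution: each `p` gets probability proportional to the number of
maximal chains passing through `p`. -/
def maxchainDist (α : Type*) [PartialOrder α] : α → ℝ := fun p =>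
  (Nat.card {C : Set α // IsMaxChain (· ≤ ·) C ∧ p ∈ C} : ℝ) /
    (Nat.card {Cq : Set α × α // IsMaxChain (· ≤ ·) Cq.1 ∧ Cq.2 ∈ Cq.1} : ℝ)

/-- A poset has coincidental down-degree expectations (CDE). -/
def IsCDE (α : Type*) [PartialOrder α] : Prop :=
  expect (maxchainDist α) ddeg = expect (uni α) ddeg

/-- A poset is mCDE: the expected down-degree with respect to the `k`-chain distribution agrees
with the uniform expected down-degree for every `k = 0, 1, …, r` (i.e. every `k` for which a
`k`-chain exists). -/
def IsMCDE (α : Type*) [PartialOrder α] : Prop :=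
  ∀ k : ℕ, (∃ c : Fin (k + 1) → α, StrictMono c) →
    expect (chainDist α k) ddeg = expect (uni α) ddeg

/-- The distributive lattice `J(P)` of order ideals (lower sets) of a poset, ordered by
inclusion. -/
abbrev OIdeal (α : Type*) [PartialOrder α] : Type _ := {I : Set α // IsLowerSet I}

/-- The indicator statistic that `p` can be toggled into the order ideal `I`. -/
def Tplus {α : Type*} [PartialOrder α] (p : α) (I : OIdeal α) : ℝ :=
  if p ∉ I.1 ∧ IsLowerSet (I.1 ∪ {p}) then 1 else 0

/-- The indicator statistic that `p` can be toggled out of the order ideal `I`. -/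
def Tminus {α : Type*} [PartialOrder α] (p : α) (I : OIdeal α) : ℝ :=
  if p ∈ I.1 ∧ IsLowerSet (I.1 \ {p}) then 1 else 0

/-- A distribution on `J(P)` is toggle-symmetric if for every `p` the probability that `p` can
be toggled in equals the probability that `p` can be toggled out. -/
def ToggleSymmetric {α : Type*} [PartialOrder α] (μ : OIdeal α → ℝ) : Prop :=
  ∀ p : α, expect μ (Tplus p) = expect μ (Tminus p)

/-- `J(P)` is toggle-CDE (tCDE): every toggle-symmetric probability distribution has the same
expected down-degree as the uniform distribution. -/
def IsTCDE (α : Type*) [PartialOrder α] : Prop :=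
  ∀ μ : OIdeal α → ℝ, IsProbDist μ → ToggleSymmetric μ →
    expect μ ddeg = expect (uni (OIdeal α)) ddeg

end CDEPaper
namespace CDEPaper

/-! ### Skew shapes and shifted shapes -/

/-- The boxes of the skew shape `λ/ν` of height `a`, in matrix coordinates with 1-based rows
and columns: row `i` (for `1 ≤ i ≤ a`) consists of the boxes `[i,j]` with `ν i < j ≤ λ i`.
The poset structure is the one induced from the componentwise (product) order on `ℕ × ℕ`. -/
def skewCells (a : ℕ) (lam nu : ℕ → ℕ) : Set (ℕ × ℕ) :=
  {b | 1 ≤ b.1 ∧ b.1 ≤ a ∧ nu b.1 < b.2 ∧ b.2 ≤ lam b.1}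

/-- The boxes of the shifted Young diagram of a strict partition `λ` of length `l`:
the boxes `[i,j]` with `1 ≤ i ≤ l` and `i ≤ j ≤ λ i + i - 1`.  The poset structure is the one
induced from the componentwise (product) order on `ℕ × ℕ`. -/
def shiftCells (l : ℕ) (lam : ℕ → ℕ) : Set (ℕ × ℕ) :=
  {b | 1 ≤ b.1 ∧ b.1 ≤ l ∧ b.1 ≤ b.2 ∧ b.2 < lam b.1 + b.1}

/-- The shifted rook statistic `R^shift_{ij}` on order ideals of (the poset of) `S`. -/
def Rshift (S : Set (ℕ × ℕ)) (i j : ℕ) (I : OIdeal ↥S) : ℝ :=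
  (∑ᶠ (q : ↥S), if (q : ℕ × ℕ).1 ≤ i ∧ (q : ℕ × ℕ).2 ≤ j then Tplus q I else 0)
    + (∑ᶠ (q : ↥S), if i ≤ (q : ℕ × ℕ).1 ∧ j ≤ (q : ℕ × ℕ).2 then Tminus q I else 0)
    - (∑ᶠ (q : ↥S),
        if (q : ℕ × ℕ).1 < i ∧ (q : ℕ × ℕ).2 < j ∧ (q : ℕ × ℕ).1 < (q : ℕ × ℕ).2 then
          Tminus q I else 0)
    - (∑ᶠ (q : ↥S),
        if i < (q : ℕ × ℕ).1 ∧ j < (q : ℕ × ℕ).2 ∧ (q : ℕ × ℕ).1 < (q : ℕ × ℕ).2 then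
          Tplus q I else 0)

/-- The shifted diagram of `λ` (of length `l`) has an outward corner indexed by `i'`
(a north step followed by an east step on the southeast border, occurring at the lattice point
`(i', λ (i'+1) + i')`) if and only if `1 ≤ i' < l` and `λ i' ≥ λ (i'+1) + 2`. -/
def IsCorner (l : ℕ) (lam : ℕ → ℕ) (i' : ℕ) : Prop :=
  1 ≤ i' ∧ i' + 1 ≤ l ∧ lam (i' + 1) + 2 ≤ lam i'

/-- An order ideal `I ∈ J(P_λ^shift)` contains the outward corner indexed by `i'`
(i.e. the lattice path of `I` contains both steps of the corner):  equivalently, `I` contains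
both the last box `[i'+1, λ(i'+1)+i']` of row `i'+1` and the box `[i', λ(i'+1)+i'+1]`. -/
def ContainsCorner (l : ℕ) (lam : ℕ → ℕ) (I : OIdeal ↥(shiftCells l lam)) (i' : ℕ) : Prop :=
  (∃ q : ↥(shiftCells l lam), (q : ℕ × ℕ) = (i' + 1, lam (i' + 1) + i') ∧ q ∈ I.1) ∧
  (∃ q : ↥(shiftCells l lam), (q : ℕ × ℕ) = (i', lam (i' + 1) + i' + 1) ∧ q ∈ I.1)

/-- A (not necessarily strict) partition `ν` (with parts `ν 1 ≥ ν 2 ≥ ⋯`) which, viewed as a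
straight shape, is balanced with height and width both equal to `k`:  it has exactly `k`
nonzero parts, its first part is `k`, and every outward corner of its boundary path (which
occurs at the point `(i, ν (i+1))` whenever `ν i > ν (i+1)`) lies on the anti-diagonal
`i + j = k` of the `k × k` square. -/
def BalancedSquare (k : ℕ) (nu : ℕ → ℕ) : Prop :=
  (∀ i, 1 ≤ i → nu (i + 1) ≤ nu i) ∧
  (∀ i, 1 ≤ i → i ≤ k → 1 ≤ nu i) ∧
  (∀ i, k < i → nu i = 0) ∧
  nu 1 = k ∧
  (∀ i, 1 ≤ i → i + 1 ≤ k → nu (i + 1) < nu i → i + nu (i + 1) = k)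

/-- The poset `P_{a,1,1,d}`: a bottom chain `w₁ < ⋯ < w_a`, two incomparable elements `x, y`
covering `w_a`, and a top chain `z₁ < ⋯ < z_d` with `z₁` covering both `x` and `y`.
It is realized inside `ℕ × ℕ` (with the componentwise order) as
`w_i = (i,i)`, `x = (a+1, a)`, `y = (a, a+1)`, `z_j = (a+j, a+j)`. -/
def Pa11d (a d : ℕ) : Set (ℕ × ℕ) :=
  {p | (1 ≤ p.1 ∧ p.1 ≤ a ∧ p.2 = p.1) ∨ p = (a + 1, a) ∨ p = (a, a + 1) ∨
    (∃ j, 1 ≤ j ∧ j ≤ d ∧ p = (a + j, a + j))}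

/-! ### Shifted set-valued tableaux

Letters of the primed alphabet `1 < 1' < 2 < 2' < ⋯` are encoded as natural numbers:
the letter `m : ℕ` has value `m / 2 + 1` and is primed iff `m` is odd
(so `0 ↦ 1, 1 ↦ 1', 2 ↦ 2, 3 ↦ 2', …`); the order on letters is the usual order on `ℕ`. -/

/-- The value of a letter. -/
def letterVal (m : ℕ) : ℕ := m / 2 + 1

/-- `T` is a shifted set-valued tableau of shape given by the box set `S`:  each box gets a
finite nonempty set of letters, all entries of a box weakly precede all entries of any strictly
larger box, each unprimed letter appears at most once in each column, and each primed letter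
appears at most once in each row. -/
def IsSSVT (S : Set (ℕ × ℕ)) (T : ↥S → Finset ℕ) : Prop :=
  (∀ u, (T u).Nonempty) ∧
  (∀ u v : ↥S, u < v → ∀ x ∈ T u, ∀ y ∈ T v, x ≤ y) ∧
  (∀ u v : ↥S, u ≠ v → (u : ℕ × ℕ).2 = (v : ℕ × ℕ).2 →
    ∀ m : ℕ, m % 2 = 0 → ¬(m ∈ T u ∧ m ∈ T v)) ∧
  (∀ u v : ↥S, u ≠ v → (u : ℕ × ℕ).1 = (v : ℕ × ℕ).1 →
    ∀ m : ℕ, m % 2 = 1 → ¬(m ∈ T u ∧ m ∈ T v))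

/-- `T` is standard: distinct entry occurrences have distinct values, and the values used are
exactly `1, 2, …, N` where `N` is the total number of entries. -/
def IsStandardT (S : Set (ℕ × ℕ)) (T : ↥S → Finset ℕ) : Prop :=
  (∀ u v : ↥S, ∀ x ∈ T u, ∀ y ∈ T v, letterVal x = letterVal y → u = v ∧ x = y) ∧
  (∀ m : ℕ, 1 ≤ m → m ≤ ∑ᶠ (u : ↥S), (T u).card → ∃ u : ↥S, ∃ x ∈ T u, letterVal x = m)

/-- `T` is barely set-valued: exactly one box has two entries; all other boxes have one. -/
def IsBarelySetValued (S : Set (ℕ × ℕ)) (T : ↥S → Finset ℕ) : Prop :=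
  ∃ u₀ : ↥S, (T u₀).card = 2 ∧ ∀ u : ↥S, u ≠ u₀ → (T u).card = 1

/-- `T` is unprimed: no primed letters appear. -/
def IsUnprimed (S : Set (ℕ × ℕ)) (T : ↥S → Finset ℕ) : Prop :=
  ∀ u : ↥S, ∀ x ∈ T u, x % 2 = 0

/-- `g^λ`: the number of unprimed standard shifted tableaux of shape `λ`. -/
def gShift (l : ℕ) (lam : ℕ → ℕ) : ℕ :=
  Nat.card {T : ↥(shiftCells l lam) → Finset ℕ //
    IsSSVT (shiftCells l lam) T ∧ IsStandardT (shiftCells l lam) T ∧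
    (∀ u, (T u).card = 1) ∧ IsUnprimed (shiftCells l lam) T}

/-- The number of standard shifted barely set-valued tableaux of shape `λ`. -/
def numBarelySVT (l : ℕ) (lam : ℕ → ℕ) : ℕ :=
  Nat.card {T : ↥(shiftCells l lam) → Finset ℕ //
    IsSSVT (shiftCells l lam) T ∧ IsStandardT (shiftCells l lam) T ∧
    IsBarelySetValued (shiftCells l lam) T}

/-! ### Toggles, rowmotion, orbits -/

/-- The toggle `τ_p` on order ideals. -/
def toggle {α : Type*} [PartialOrder α] (p : α) (I : OIdeal α) : OIdeal α :=
  if h : p ∉ I.1 ∧ IsLowerSet (I.1 ∪ {p}) then ⟨I.1 ∪ {p}, h.2⟩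
  else if h' : p ∈ I.1 ∧ IsLowerSet (I.1 \ {p}) then ⟨I.1 \ {p}, h'.2⟩
  else I

/-- The composition of the toggles along a list, applied head first. -/
def applyToggles {α : Type*} [PartialOrder α] (L : List α) (I : OIdeal α) : OIdeal α :=
  L.foldl (fun J p => toggle p J) I

/-- The forward orbit of `x` under `Φ` (for invertible `Φ` on a finite set, the orbit). -/
def orbit {β : Type*} (Φ : β → β) (x : β) : Set β := {y | ∃ n : ℕ, Φ^[n] x = y}

/-- The probability distribution that is uniform on the orbit of `x` under `Φ` and zero
outside of it. -/
def orbitDist {β : Type*} (Φ : β → β) (x : β) : β → ℝ := fun y =>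
  if y ∈ orbit Φ x then (Nat.card ↥(orbit Φ x) : ℝ)⁻¹ else 0

/-- Rowmotion on order ideals: `I ↦ {x : x ≤ y for some minimal element y of P \ I}`. -/
def rowmotion {α : Type*} [PartialOrder α] (I : OIdeal α) : OIdeal α :=
  ⟨{x | ∃ y, (y ∉ I.1 ∧ ∀ z, z ∉ I.1 → z ≤ y → z = y) ∧ x ≤ y}, by
    intro a b hba ha
    obtain ⟨y, hy, hay⟩ := ha
    exact ⟨y, hy, le_trans hba hay⟩⟩

/-- The antichain cardinality statistic `I ↦ #max(I)`. -/
def antichainCard {α : Type*} [PartialOrder α] (I : OIdeal α) : ℝ :=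
  (Nat.card {p : α // p ∈ I.1 ∧ ∀ q, q ∈ I.1 → p ≤ q → p = q} : ℝ)

end CDEPaper

namespace CDEPaper

/-! ### Auxiliary development for the proof of Statement 12 -/

section Aux
variable {α : Type*} [PartialOrder α]

lemma addable_iff {I : Set α} (hI : IsLowerSet I) (q : α) :
    IsLowerSet (I ∪ {q}) ↔ ∀ s, s ≤ q → s = q ∨ s ∈ I := by
  constructor
  · intro h s hs
    have := h hs (Set.mem_union_right _ rfl)
    rcases this with h' | h'
    · exact Or.inr h'
    · exact Or.inl h'
  · intro h a b hba ha
    rcases ha with ha | ha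
    · exact Or.inl (hI hba ha)
    · rw [Set.mem_singleton_iff] at ha
      subst ha
      rcases h b hba with h' | h'
      · exact Or.inr (by simp [h'])
      · exact Or.inl h'

lemma removable_iff {I : Set α} (hI : IsLowerSet I) {q : α} (hq : q ∈ I) :
    IsLowerSet (I \ {q}) ↔ ∀ s, q ≤ s → s = q ∨ s ∉ I := by
  constructor
  · intro h s hs
    by_contra hc
    push_neg at hc
    have hsq : s ∈ I \ {q} := ⟨hc.2, by simp [hc.1]⟩
    have := h hs hsq
    simp at this
  · intro h a b hba ha
    refine ⟨hI hba ha.1, ?_⟩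
    simp only [Set.mem_singleton_iff]
    intro hbq
    subst hbq
    rcases h a hba with h' | h'
    · exact ha.2 (by simp [h'])
    · exact h' ha.1

lemma Tplus_eq (I : OIdeal α) (q : α) :
    Tplus q I = if q ∉ I.1 ∧ ∀ s, s ≤ q → s = q ∨ s ∈ I.1 then 1 else 0 := by
  unfold Tplus
  congr 1
  simp only [eq_iff_iff]
  exact and_congr_right fun _ => addable_iff I.2 q

lemma Tminus_eq (I : OIdeal α) (q : α) :
    Tminus q I = if q ∈ I.1 ∧ ∀ s, q ≤ s → s = q ∨ s ∉ I.1 then 1 else 0 := by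
  unfold Tminus
  congr 1
  simp only [eq_iff_iff]
  constructor
  · rintro ⟨h1, h2⟩; exact ⟨h1, (removable_iff I.2 h1).1 h2⟩
  · rintro ⟨h1, h2⟩; exact ⟨h1, (removable_iff I.2 h1).2 h2⟩

/-- covers of an ideal correspond to removable elements -/
lemma ddeg_oideal [Finite α] (I : OIdeal α) :
    ddeg I = ∑ᶠ q : α, Tminus q I := by
  classical
  letI : Fintype α := Fintype.ofFinite α
  have key : Nat.card {J : OIdeal α // J ⋖ I} =
      Nat.card {q : α // q ∈ I.1 ∧ IsLowerSet (I.1 \ {q})} := by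
    refine (Nat.card_congr (Equiv.ofBijective ?_ ⟨?_, ?_⟩)).symm
    · refine fun x => ⟨⟨I.1 \ {x.1}, x.2.2⟩, ?_⟩
      have hlt : (⟨I.1 \ {x.1}, x.2.2⟩ : OIdeal α) < I := by
        refine lt_of_le_of_ne (fun a ha => ha.1) ?_
        intro hEq
        have hEq' : I.1 \ {x.1} = I.1 := congrArg Subtype.val hEq
        have : (x.1 : α) ∈ I.1 \ {x.1} := by rw [hEq']; exact x.2.1
        simp at this
      refine ⟨hlt, ?_⟩
      intro K hK1 hK2
      have hKI : K.1 ⊆ I.1 := hK2.le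
      by_cases hx : (x.1 : α) ∈ K.1
      · have : I.1 ⊆ K.1 := by
          intro a ha
          by_cases hax : a = x.1
          · subst hax; exact hx
          · exact hK1.le ⟨ha, hax⟩
        exact hK2.ne (le_antisymm hKI this)
      · have : K.1 ⊆ I.1 \ {x.1} := fun a ha => ⟨hKI ha, fun h => hx (h ▸ ha)⟩
        exact hK1.ne' (le_antisymm this hK1.le)
    · intro x y hxy
      have h1 : I.1 \ {x.1} = I.1 \ {y.1} := congrArg (fun J => J.1.1) hxy
      ext
      by_contra hne
      have : (x.1 : α) ∈ I.1 \ {x.1} := by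
        rw [h1]; exact ⟨x.2.1, by simp [hne]⟩
      simp at this
    · rintro ⟨J, hJ⟩
      have hlt := hJ.1
      have hne : ¬ I.1 ⊆ J.1 := by
        intro hsub
        exact hlt.ne (le_antisymm hlt.le hsub)
      obtain ⟨q, hqI, hqJ⟩ := Set.not_subset.1 hne
      -- pick a maximal element of I.1 \ J.1
      obtain ⟨m, hm, hmax⟩ := Set.Finite.exists_maximalFor id (I.1 \ J.1)
        (Set.toFinite _) ⟨q, hqI, hqJ⟩
      have hmI : m ∈ I.1 := hm.1
      have hmJ : m ∉ J.1 := hm.2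
      have hmaxI : ∀ s, m ≤ s → s = m ∨ s ∉ I.1 := by
        intro s hms
        by_cases hsI : s ∈ I.1
        · by_cases hsJ : s ∈ J.1
          · exact absurd (J.2 hms hsJ) hmJ
          · exact Or.inl (le_antisymm (hmax ⟨hsI, hsJ⟩ hms) hms)
        · exact Or.inr hsI
      have hlow : IsLowerSet (I.1 \ {m}) := (removable_iff I.2 hmI).2 hmaxI
      have hJle : J.1 ⊆ I.1 \ {m} := by
        intro a haJ
        exact ⟨hlt.le haJ, fun h => hmJ (h ▸ haJ)⟩
      have hMlt : (⟨I.1 \ {m}, hlow⟩ : OIdeal α) < I := by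
        refine lt_of_le_of_ne (fun a ha => ha.1) ?_
        intro hEq
        have hEq' : I.1 \ {m} = I.1 := congrArg Subtype.val hEq
        have : m ∈ I.1 \ {m} := by rw [hEq']; exact hmI
        simp at this
      have hJM : J = ⟨I.1 \ {m}, hlow⟩ := by
        by_contra hne2
        have : J < ⟨I.1 \ {m}, hlow⟩ := lt_of_le_of_ne hJle hne2
        exact hJ.2 this hMlt
      exact ⟨⟨m, hmI, hlow⟩, Subtype.ext hJM.symm⟩
  unfold ddeg
  rw [key, finsum_eq_sum_of_fintype]
  rw [Nat.card_eq_fintype_card, Fintype.card_subtype]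
  rw [← Finset.sum_boole]
  push_cast
  refine Finset.sum_congr rfl fun q _ => ?_
  rfl


lemma sum_Tplus_eq_sum_Tminus [Finite α] [Fintype (OIdeal α)] (p : α) :
    ∑ I : OIdeal α, Tplus p I = ∑ I : OIdeal α, Tminus p I := by
  classical
  have e : {I : OIdeal α // p ∉ I.1 ∧ IsLowerSet (I.1 ∪ {p})} ≃
      {I : OIdeal α // p ∈ I.1 ∧ IsLowerSet (I.1 \ {p})} := by
    refine ⟨fun x => ⟨⟨x.1.1 ∪ {p}, x.2.2⟩, Set.mem_union_right _ rfl, ?_⟩,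
      fun y => ⟨⟨y.1.1 \ {p}, y.2.2⟩, by simp, ?_⟩, ?_, ?_⟩
    · have h : (x.1.1 ∪ {p}) \ {p} = x.1.1 := by
        ext a
        simp only [Set.mem_diff, Set.mem_union, Set.mem_singleton_iff]
        constructor
        · rintro ⟨h1 | h1, h2⟩
          · exact h1
          · exact absurd h1 h2
        · intro ha
          exact ⟨Or.inl ha, fun h => x.2.1 (h ▸ ha)⟩
      rw [h]; exact x.1.2
    · have h : (y.1.1 \ {p}) ∪ {p} = y.1.1 := by
        ext a
        simp only [Set.mem_union, Set.mem_diff, Set.mem_singleton_iff]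
        constructor
        · rintro (⟨h1, _⟩ | h1)
          · exact h1
          · exact h1 ▸ y.2.1
        · intro ha
          by_cases h : a = p
          · exact Or.inr h
          · exact Or.inl ⟨ha, h⟩
      rw [h]; exact y.1.2
    · rintro ⟨⟨I, hI⟩, h1, h2⟩
      refine Subtype.ext (Subtype.ext ?_)
      show (I ∪ {p}) \ {p} = I
      ext a
      simp only [Set.mem_diff, Set.mem_union, Set.mem_singleton_iff]
      constructor
      · rintro ⟨h' | h', h''⟩
        · exact h'
        · exact absurd h' h''
      · intro ha
        exact ⟨Or.inl ha, fun h => h1 (h ▸ ha)⟩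
    · rintro ⟨⟨I, hI⟩, h1, h2⟩
      refine Subtype.ext (Subtype.ext ?_)
      show (I \ {p}) ∪ {p} = I
      ext a
      simp only [Set.mem_union, Set.mem_diff, Set.mem_singleton_iff]
      constructor
      · rintro (⟨h', _⟩ | h')
        · exact h'
        · exact h' ▸ h1
      · intro ha
        by_cases h : a = p
        · exact Or.inr h
        · exact Or.inl ⟨ha, h⟩
  have h1 : ∑ I : OIdeal α, Tplus p I =
      ((Finset.univ.filter fun I : OIdeal α => p ∉ I.1 ∧ IsLowerSet (I.1 ∪ {p})).card : ℝ) := by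
    rw [← Finset.sum_boole]
    exact Finset.sum_congr rfl fun I _ => rfl
  have h2 : ∑ I : OIdeal α, Tminus p I =
      ((Finset.univ.filter fun I : OIdeal α => p ∈ I.1 ∧ IsLowerSet (I.1 \ {p})).card : ℝ) := by
    rw [← Finset.sum_boole]
    exact Finset.sum_congr rfl fun I _ => rfl
  rw [h1, h2]
  congr 1
  rw [← Fintype.card_subtype, ← Fintype.card_subtype]
  exact Fintype.card_congr e

lemma isProbDist_uni [Finite α] [Nonempty α] : IsProbDist (uni α) := by
  classical
  letI : Fintype α := Fintype.ofFinite α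
  constructor
  · intro x
    unfold uni
    positivity
  · unfold uni
    rw [finsum_eq_sum_of_fintype]
    rw [Finset.sum_const, Nat.card_eq_fintype_card]
    simp only [nsmul_eq_mul, Finset.card_univ]
    rw [mul_inv_cancel₀]
    exact_mod_cast Fintype.card_ne_zero

lemma toggleSymmetric_uni [Finite α] : ToggleSymmetric (uni (OIdeal α)) := by
  classical
  letI : Fintype α := Fintype.ofFinite α
  letI : Fintype (OIdeal α) := Fintype.ofFinite _
  intro p
  unfold expect uni
  rw [finsum_eq_sum_of_fintype, finsum_eq_sum_of_fintype]
  rw [← Finset.mul_sum, ← Finset.mul_sum, sum_Tplus_eq_sum_Tminus]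


lemma Tminus_zero_of_notmem (I : OIdeal α) {q : α} (h : q ∉ I.1) : Tminus q I = 0 :=
  if_neg fun hc => h hc.1

lemma Tplus_zero_of_mem (I : OIdeal α) {q : α} (h : q ∈ I.1) : Tplus q I = 0 :=
  if_neg fun hc => hc.1 h

lemma Tplus_zero_of_missing_below (I : OIdeal α) {s q : α} (hsq : s ≤ q) (hne : s ≠ q)
    (hs : s ∉ I.1) : Tplus q I = 0 := by
  rw [Tplus_eq]
  exact if_neg fun hc => ((hc.2 s hsq).elim (fun h => hne h) (fun h => hs h))

lemma Tminus_zero_of_above (I : OIdeal α) {s q : α} (hqs : q ≤ s) (hne : s ≠ q)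
    (hs : s ∈ I.1) : Tminus q I = 0 := by
  rw [Tminus_eq]
  exact if_neg fun hc => ((hc.2 s hqs).elim (fun h => hne h) (fun h => h hs))

lemma Tplus_one (I : OIdeal α) {q : α} (h1 : q ∉ I.1)
    (h2 : ∀ s, s ≤ q → s = q ∨ s ∈ I.1) : Tplus q I = 1 := by
  rw [Tplus_eq]; exact if_pos ⟨h1, h2⟩

lemma Tminus_one (I : OIdeal α) {q : α} (h1 : q ∈ I.1)
    (h2 : ∀ s, q ≤ s → s = q ∨ s ∉ I.1) : Tminus q I = 1 := by
  rw [Tminus_eq]; exact if_pos ⟨h1, h2⟩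

end Aux



/-- Abstract properties of the strict partition `λ = δ_n + ν` with `ν` balanced. -/
structure NiceShape (l : ℕ) (lam : ℕ → ℕ) : Prop where
  hl : 1 ≤ l
  hpos : ∀ a, 1 ≤ a → a ≤ l → 1 ≤ lam a
  hdec : ∀ a, 1 ≤ a → a < l → lam (a + 1) < lam a
  hlast : lam l = 1
  hcorner : ∀ a, 2 ≤ a → a ≤ l → lam a + 2 ≤ lam (a - 1) → lam a + 2 * a = lam 1 + 2

namespace NiceShape

variable {l : ℕ} {lam : ℕ → ℕ} (hs : NiceShape l lam)
include hs

lemma mono : ∀ a b, 1 ≤ a → a ≤ b → b ≤ l → lam b + b ≤ lam a + a := by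
  intro a b ha hab
  induction b, hab using Nat.le_induction with
  | base => intro _; exact le_rfl
  | succ b hab ih =>
    intro hbl
    have h1 : lam (b + 1) < lam b := hs.hdec b (le_trans ha hab) (by omega)
    have := ih (by omega)
    omega

lemma shift_finite : (shiftCells l lam).Finite := by
  apply Set.Finite.subset (Set.finite_Iic ((l, lam 1 + 1) : ℕ × ℕ))
  rintro ⟨a, b⟩ ⟨h1, h2, h3, h4⟩
  dsimp only at h1 h2 h3 h4
  have := hs.mono 1 a le_rfl h1 h2
  exact Set.mem_Iic.2 (Prod.mk_le_mk.2 ⟨h2, by omega⟩)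

omit hs in
lemma mem_shift {x : ℕ × ℕ} :
    x ∈ shiftCells l lam ↔ 1 ≤ x.1 ∧ x.1 ≤ l ∧ x.1 ≤ x.2 ∧ x.2 < lam x.1 + x.1 :=
  Iff.rfl

omit hs in
lemma box_le {q q' : ↥(shiftCells l lam)} :
    q ≤ q' ↔ q.val.1 ≤ q'.val.1 ∧ q.val.2 ≤ q'.val.2 := by
  rw [← Subtype.coe_le_coe, Prod.le_def]

omit hs in
lemma box_lt {q q' : ↥(shiftCells l lam)} (h1 : q.val.1 ≤ q'.val.1)
    (h2 : q.val.2 ≤ q'.val.2) (h3 : q.val ≠ q'.val) : q < q' :=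
  lt_of_le_of_ne (box_le.2 ⟨h1, h2⟩) (fun h => h3 (congrArg Subtype.val h))

lemma between_cover {p q : ↥(shiftCells l lam)} (hpq : p < q)
    (hE : q.val ≠ (p.val.1, p.val.2 + 1)) (hS : q.val ≠ (p.val.1 + 1, p.val.2)) :
    ∃ s : ↥(shiftCells l lam), p < s ∧ s < q := by
  have hle := hpq.le
  have hnv : p.val ≠ q.val := fun h => hpq.ne (Subtype.ext h)
  obtain ⟨⟨i, j⟩, hpm⟩ := p
  obtain ⟨⟨a, b⟩, hqm⟩ := q
  rw [mem_shift] at hpm hqm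
  obtain ⟨hp1, hp2, hp3, hp4⟩ := hpm
  obtain ⟨hq1, hq2, hq3, hq4⟩ := hqm
  dsimp only at hp1 hp2 hp3 hp4 hq1 hq2 hq3 hq4 hE hS hnv
  obtain ⟨h1, h2⟩ := box_le.1 hle
  dsimp only at h1 h2
  have hE' : ¬(a = i ∧ b = j + 1) := fun h => hE (by rw [h.1, h.2])
  have hS' : ¬(a = i + 1 ∧ b = j) := fun h => hS (by rw [h.1, h.2])
  have hnv' : ¬(i = a ∧ j = b) := fun h => hnv (by rw [h.1, h.2])
  have hmono := fun (c d : ℕ) (h1 : 1 ≤ c) (h2 : c ≤ d) (h3 : d ≤ l) => hs.mono c d h1 h2 h3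
  by_cases hai : a = i
  · subst hai
    have hmem : (a, j + 1) ∈ shiftCells l lam := ⟨hp1, hp2, by omega, by dsimp only; omega⟩
    exact ⟨⟨(a, j + 1), hmem⟩,
      box_lt (by dsimp only; omega) (by dsimp only; omega)
        (by dsimp only; intro h; rw [Prod.ext_iff] at h; dsimp only at h; omega),
      box_lt (by dsimp only; omega) (by dsimp only; omega)
        (by dsimp only; intro h; rw [Prod.ext_iff] at h; dsimp only at h; omega)⟩
  · by_cases hbj : b = j
    · subst hbj
      have h5 : lam a + a ≤ lam (i + 1) + (i + 1) := hmono (i + 1) a (by omega) (by omega) hq2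
      have hmem : (i + 1, b) ∈ shiftCells l lam := ⟨by omega, by omega, by omega, by dsimp only; omega⟩
      exact ⟨⟨(i + 1, b), hmem⟩,
        box_lt (by dsimp only; omega) (by dsimp only; omega)
          (by dsimp only; intro h; rw [Prod.ext_iff] at h; dsimp only at h; omega),
        box_lt (by dsimp only; omega) (by dsimp only; omega)
          (by dsimp only; intro h; rw [Prod.ext_iff] at h; dsimp only at h; omega)⟩
    · have h5 : lam a + a ≤ lam i + i := hmono i a hp1 h1 hq2
      have hmem : (i, j + 1) ∈ shiftCells l lam := ⟨hp1, hp2, by omega, by dsimp only; omega⟩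
      exact ⟨⟨(i, j + 1), hmem⟩,
        box_lt (by dsimp only; omega) (by dsimp only; omega)
          (by dsimp only; intro h; rw [Prod.ext_iff] at h; dsimp only at h; omega),
        box_lt (by dsimp only; omega) (by dsimp only; omega)
          (by dsimp only; intro h; rw [Prod.ext_iff] at h; dsimp only at h; omega)⟩

lemma between_cocover {p q : ↥(shiftCells l lam)} (hqp : q < p)
    (hW : q.val ≠ (p.val.1, p.val.2 - 1)) (hN : q.val ≠ (p.val.1 - 1, p.val.2)) :
    ∃ s : ↥(shiftCells l lam), q < s ∧ s < p := by
  have hle := hqp.le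
  have hnv : q.val ≠ p.val := fun h => hqp.ne (Subtype.ext h)
  obtain ⟨⟨i, j⟩, hpm⟩ := p
  obtain ⟨⟨a, b⟩, hqm⟩ := q
  rw [mem_shift] at hpm hqm
  obtain ⟨hp1, hp2, hp3, hp4⟩ := hpm
  obtain ⟨hq1, hq2, hq3, hq4⟩ := hqm
  dsimp only at hp1 hp2 hp3 hp4 hq1 hq2 hq3 hq4 hW hN hnv
  obtain ⟨h1, h2⟩ := box_le.1 hle
  dsimp only at h1 h2
  have hW' : ¬(a = i ∧ b = j - 1) := fun h => hW (by rw [h.1, h.2])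
  have hN' : ¬(a = i - 1 ∧ b = j) := fun h => hN (by rw [h.1, h.2])
  have hnv' : ¬(a = i ∧ b = j) := fun h => hnv (by rw [h.1, h.2])
  have hmono := fun (c d : ℕ) (h1 : 1 ≤ c) (h2 : c ≤ d) (h3 : d ≤ l) => hs.mono c d h1 h2 h3
  by_cases hai : a = i
  · subst hai
    -- same row: b ≤ j - 2, use (a, b+1)
    have hmem : (a, b + 1) ∈ shiftCells l lam := ⟨hq1, hq2, by omega, by dsimp only; omega⟩
    exact ⟨⟨(a, b + 1), hmem⟩,
      box_lt (by dsimp only; omega) (by dsimp only; omega)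
        (by dsimp only; intro h; rw [Prod.ext_iff] at h; dsimp only at h; omega),
      box_lt (by dsimp only; omega) (by dsimp only; omega)
        (by dsimp only; intro h; rw [Prod.ext_iff] at h; dsimp only at h; omega)⟩
  · by_cases hbj : b = j
    · subst hbj
      -- same column: a ≤ i - 2, use (a+1, b)
      have h5 : lam i + i ≤ lam (a + 1) + (a + 1) := hmono (a + 1) i (by omega) (by omega) hp2
      have hmem : (a + 1, b) ∈ shiftCells l lam := ⟨by omega, by omega, by omega, by dsimp only; omega⟩
      exact ⟨⟨(a + 1, b), hmem⟩,
        box_lt (by dsimp only; omega) (by dsimp only; omega)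
          (by dsimp only; intro h; rw [Prod.ext_iff] at h; dsimp only at h; omega),
        box_lt (by dsimp only; omega) (by dsimp only; omega)
          (by dsimp only; intro h; rw [Prod.ext_iff] at h; dsimp only at h; omega)⟩
    · -- a ≤ i - 1, b ≤ j - 1 : use (a, b+1)
      have h5 : lam i + i ≤ lam a + a := hmono a i hq1 h1 hp2
      have hmem : (a, b + 1) ∈ shiftCells l lam := ⟨hq1, hq2, by omega, by dsimp only; omega⟩
      exact ⟨⟨(a, b + 1), hmem⟩,
        box_lt (by dsimp only; omega) (by dsimp only; omega)
          (by dsimp only; intro h; rw [Prod.ext_iff] at h; dsimp only at h; omega),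
        box_lt (by dsimp only; omega) (by dsimp only; omega)
          (by dsimp only; intro h; rw [Prod.ext_iff] at h; dsimp only at h; omega)⟩

end NiceShape

section Core
variable {l : ℕ} {lam : ℕ → ℕ}

/-- The toggle-coefficient function. -/
def AAc (m : ℕ) (c : ℕ × ℕ) : ℝ :=
  if c.1 = c.2 then ((m : ℝ) + 3 - 2 * c.1) / 4 else ((m : ℝ) + 2 - c.1 - c.2) / 2

/-- The magic statistic. -/
def Gstat (l : ℕ) (lam : ℕ → ℕ) (I : OIdeal ↥(shiftCells l lam)) : ℝ :=
  ∑ᶠ q : ↥(shiftCells l lam),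
    (AAc (lam 1) q.val * Tplus q I + (1 - AAc (lam 1) q.val) * Tminus q I)

/-- The local difference function. -/
def Dfun (l : ℕ) (lam : ℕ → ℕ) (I I' : OIdeal ↥(shiftCells l lam))
    (q : ↥(shiftCells l lam)) : ℝ :=
  AAc (lam 1) q.val * (Tplus q I' - Tplus q I) +
    (1 - AAc (lam 1) q.val) * (Tminus q I' - Tminus q I)

lemma sum_boxed {S : Set (ℕ × ℕ)} [Fintype ↥S] (T : Finset (ℕ × ℕ)) (f : ↥S → ℝ)
    (h0 : ∀ q : ↥S, q.val ∉ T → f q = 0) :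
    ∑ q : ↥S, f q = ∑ c ∈ T, (if h : c ∈ S then f ⟨c, h⟩ else 0) := by
  classical
  have step1 : ∀ q : ↥S, f q = ∑ c ∈ T, if c = q.val then f q else 0 := by
    intro q
    rw [Finset.sum_ite_eq' T q.val (fun _ => f q)]
    by_cases h : (q.val : ℕ × ℕ) ∈ T
    · rw [if_pos h]
    · rw [if_neg h, h0 q h]
  rw [Finset.sum_congr rfl fun q _ => step1 q, Finset.sum_comm]
  refine Finset.sum_congr rfl fun c hc => ?_
  by_cases h : c ∈ S
  · rw [dif_pos h]
    rw [Finset.sum_eq_single (⟨c, h⟩ : ↥S)]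
    · rw [if_pos rfl]
    · intro q _ hq
      rw [if_neg (fun hcq => hq (Subtype.ext hcq.symm))]
    · intro hmem; exact absurd (Finset.mem_univ _) hmem
  · rw [dif_neg h]
    apply Finset.sum_eq_zero
    intro q _
    rw [if_neg (fun hcq => h (by rw [hcq]; exact q.2))]


lemma AAc_diag (m a : ℕ) : AAc m (a, a) = ((m : ℝ) + 3 - 2 * a) / 4 := by
  simp [AAc]

lemma AAc_off (m : ℕ) {a b : ℕ} (h : a ≠ b) :
    AAc m (a, b) = ((m : ℝ) + 2 - a - b) / 2 := by
  simp [AAc, h]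

set_option maxHeartbeats 2000000 in
lemma Gstep (hs : NiceShape l lam) (I : OIdeal ↥(shiftCells l lam))
    (p : ↥(shiftCells l lam)) (hp : p ∉ I.1) (hlow : IsLowerSet (I.1 ∪ {p})) :
    Gstat l lam ⟨I.1 ∪ {p}, hlow⟩ = Gstat l lam I := by
  classical
  have hfin : Finite ↥(shiftCells l lam) := hs.shift_finite.to_subtype
  letI : Fintype ↥(shiftCells l lam) := Fintype.ofFinite _
  have hadd : ∀ s, s ≤ p → s = p ∨ s ∈ I.1 := (addable_iff I.2 p).1 hlow
  obtain ⟨⟨i, j⟩, hpmem⟩ := p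
  set p : ↥(shiftCells l lam) := ⟨(i, j), hpmem⟩ with hpdef
  set I' : OIdeal ↥(shiftCells l lam) := ⟨I.1 ∪ {p}, hlow⟩ with hI'def
  have hpm := hpmem
  rw [NiceShape.mem_shift] at hpm
  obtain ⟨hi1, hil, hij, hjl⟩ := hpm
  dsimp only at hi1 hil hij hjl
  have hpI' : p ∈ I'.1 := Set.mem_union_right _ rfl
  -- difference of the statistics
  have hG : Gstat l lam I' - Gstat l lam I = ∑ q, Dfun l lam I I' q := by
    unfold Gstat Dfun
    rw [finsum_eq_sum_of_fintype, finsum_eq_sum_of_fintype, ← Finset.sum_sub_distrib]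
    exact Finset.sum_congr rfl fun q _ => by ring
  -- support of the difference
  have hDsupp : ∀ q : ↥(shiftCells l lam),
      q.val ∉ ({(i, j), (i, j + 1), (i - 1, j), (i + 1, j), (i, j - 1)} : Finset (ℕ × ℕ)) →
      Dfun l lam I I' q = 0 := by
    intro q hqT
    simp only [Finset.mem_insert, Finset.mem_singleton] at hqT
    push_neg at hqT
    obtain ⟨hq1, hq2, hq3, hq4, hq5⟩ := hqT
    have hqp : q ≠ p := fun h => hq1 (congrArg Subtype.val h)
    have hTp : Tplus q I' = Tplus q I := by
      rw [Tplus_eq, Tplus_eq]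
      congr 1
      simp only [eq_iff_iff]
      refine and_congr ?_ ?_
      · constructor
        · intro h hqI; exact h (Set.mem_union_left _ hqI)
        · intro h hqI'
          rcases hqI' with h' | h'
          · exact h h'
          · exact hqp h'
      · constructor
        · intro h s hsq
          rcases h s hsq with h' | h'
          · exact Or.inl h'
          · rcases h' with h' | h'
            · exact Or.inr h'
            · -- s = p, impossible: q would cover p, excluded
              rw [Set.mem_singleton_iff] at h'
              exfalso
              have hple : p ≤ q := h' ▸ hsq
              have hplt : p < q :=
                lt_of_le_of_ne hple (fun h'' => hq1 (by rw [← h'']))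
              obtain ⟨s0, hs1, hs2⟩ := hs.between_cover hplt hq2 hq4
              rcases h s0 hs2.le with h3 | h3
              · exact hs2.ne h3
              · rcases h3 with h4 | h4
                · exact hp (I.2 hs1.le h4)
                · rw [Set.mem_singleton_iff] at h4
                  exact hs1.ne' h4
        · intro h s hsq
          rcases h s hsq with h' | h'
          · exact Or.inl h'
          · exact Or.inr (Set.mem_union_left _ h')
    have hTm : Tminus q I' = Tminus q I := by
      rw [Tminus_eq, Tminus_eq]
      congr 1
      simp only [eq_iff_iff]
      refine and_congr ?_ ?_
      · constructor
        · intro h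
          rcases h with h' | h'
          · exact h'
          · exact absurd h' hqp
        · intro h; exact Set.mem_union_left _ h
      · constructor
        · intro h s hqs
          rcases h s hqs with h' | h'
          · exact Or.inl h'
          · exact Or.inr fun hsI => h' (Set.mem_union_left _ hsI)
        · intro h s hqs
          rcases h s hqs with h' | h'
          · exact Or.inl h'
          · refine Or.inr fun hsI' => ?_
            rcases hsI' with h'' | h''
            · exact h' h''
            · -- s = p with q < p: q would be a cocover, excluded
              rw [Set.mem_singleton_iff] at h''
              have hqle : q ≤ p := h'' ▸ hqs
              have hqlt : q < p := lt_of_le_of_ne hqle hqp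
              obtain ⟨s0, hs1, hs2⟩ := hs.between_cocover hqlt hq5 hq3
              have hs0I : s0 ∈ I.1 := by
                rcases hadd s0 hs2.le with h3 | h3
                · exact absurd h3 hs2.ne
                · exact h3
              rcases h s0 hs1.le with h3 | h3
              · exact hs1.ne' h3
              · exact h3 hs0I
    unfold Dfun
    rw [hTp, hTm]
    ring
  -- the five-point decomposition
  have hsum := sum_boxed (S := shiftCells l lam)
      ({(i, j), (i, j + 1), (i - 1, j), (i + 1, j), (i, j - 1)} : Finset (ℕ × ℕ))
      (Dfun l lam I I') hDsupp
  have hd1 : ((i, j) : ℕ × ℕ) ∉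
      ({(i, j + 1), (i - 1, j), (i + 1, j), (i, j - 1)} : Finset (ℕ × ℕ)) := by
    simp only [Finset.mem_insert, Finset.mem_singleton, Prod.mk.injEq]
    omega
  have hd2 : ((i, j + 1) : ℕ × ℕ) ∉
      ({(i - 1, j), (i + 1, j), (i, j - 1)} : Finset (ℕ × ℕ)) := by
    simp only [Finset.mem_insert, Finset.mem_singleton, Prod.mk.injEq]
    omega
  have hd3 : ((i - 1, j) : ℕ × ℕ) ∉ ({(i + 1, j), (i, j - 1)} : Finset (ℕ × ℕ)) := by
    simp only [Finset.mem_insert, Finset.mem_singleton, Prod.mk.injEq]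
    omega
  have hd4 : ((i + 1, j) : ℕ × ℕ) ∉ ({(i, j - 1)} : Finset (ℕ × ℕ)) := by
    simp only [Finset.mem_singleton, Prod.mk.injEq]
    omega
  rw [Finset.sum_insert hd1, Finset.sum_insert hd2, Finset.sum_insert hd3,
    Finset.sum_insert hd4, Finset.sum_singleton] at hsum
  -- the two auxiliary membership propositions
  set XI : Prop := ∃ hx : ((i - 1, j + 1) : ℕ × ℕ) ∈ shiftCells l lam,
    (⟨(i - 1, j + 1), hx⟩ : ↥(shiftCells l lam)) ∈ I.1 with hXIdef
  set YI : Prop := ∃ hy : ((i + 1, j - 1) : ℕ × ℕ) ∈ shiftCells l lam,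
    (⟨(i + 1, j - 1), hy⟩ : ↥(shiftCells l lam)) ∈ I.1 with hYIdef
  -- value of D at the east point
  have hqEac : ∀ hE : ((i, j + 1) : ℕ × ℕ) ∈ shiftCells l lam,
      Dfun l lam I I' ⟨(i, j + 1), hE⟩ =
        AAc (lam 1) (i, j + 1) * (if i = 1 ∨ XI then 1 else 0) := by
    intro hE
    set qE : ↥(shiftCells l lam) := ⟨(i, j + 1), hE⟩ with hqEdef
    have hpqE : p ≤ qE := NiceShape.box_le.2 ⟨by dsimp +zetaDelta only; omega, by dsimp +zetaDelta only; omega⟩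
    have hpneqE : p ≠ qE := fun h => by
      have := congrArg (fun z : ↥(shiftCells l lam) => (Subtype.val z).2) h
      dsimp +zetaDelta only at this; omega
    have hqEnI : qE ∉ I.1 := fun h => hp (I.2 hpqE h)
    have hqEnI' : qE ∉ I'.1 := fun h => by
      rcases h with h' | h'
      · exact hqEnI h'
      · rw [Set.mem_singleton_iff] at h'; exact hpneqE h'.symm
    have h1 : Tplus qE I = 0 := Tplus_zero_of_missing_below I hpqE hpneqE hp
    have h3 : Tminus qE I = 0 := Tminus_zero_of_notmem I hqEnI
    have h4 : Tminus qE I' = 0 := Tminus_zero_of_notmem I' hqEnI'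
    have h2 : Tplus qE I' = (if i = 1 ∨ XI then 1 else 0) := by
      by_cases hc : i = 1 ∨ XI
      · rw [if_pos hc]
        refine Tplus_one I' hqEnI' ?_
        intro s hs'
        obtain ⟨hs1', hs2'⟩ := NiceShape.box_le.1 hs'
        dsimp +zetaDelta only at hs1' hs2'
        by_cases hb : s.val.2 ≤ j
        · have hsp : s ≤ p := NiceShape.box_le.2 ⟨by dsimp +zetaDelta only; omega, by dsimp +zetaDelta only; omega⟩
          rcases hadd s hsp with h' | h'
          · exact Or.inr (Set.mem_union_right _ (Set.mem_singleton_iff.2 h'))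
          · exact Or.inr (Set.mem_union_left _ h')
        · have hb2 : s.val.2 = j + 1 := by omega
          by_cases ha : s.val.1 = i
          · refine Or.inl (Subtype.ext ?_)
            have hsv : s.val = (s.val.1, s.val.2) := rfl
            rw [hsv, ha, hb2]
          · have hs3 := s.2
            rw [NiceShape.mem_shift] at hs3
            have hi2 : 2 ≤ i := by omega
            rcases hc with hc1 | hc2
            · omega
            · obtain ⟨hx, hxI⟩ := hc2
              have hsx : s ≤ (⟨(i - 1, j + 1), hx⟩ : ↥(shiftCells l lam)) :=
                NiceShape.box_le.2 ⟨by dsimp +zetaDelta only; omega, by dsimp +zetaDelta only; omega⟩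
              exact Or.inr (Set.mem_union_left _ (I.2 hsx hxI))
      · rw [if_neg hc]
        push_neg at hc
        obtain ⟨hi1ne, hXIn⟩ := hc
        have hi2 : 2 ≤ i := by omega
        have hEm := hE
        rw [NiceShape.mem_shift] at hEm
        dsimp only at hEm
        have hmono : lam i + i ≤ lam (i - 1) + (i - 1) :=
          hs.mono (i - 1) i (by omega) (by omega) hil
        have hxmem : ((i - 1, j + 1) : ℕ × ℕ) ∈ shiftCells l lam := by
          rw [NiceShape.mem_shift]
          dsimp only
          omega
        refine Tplus_zero_of_missing_below I'
          (s := ⟨(i - 1, j + 1), hxmem⟩) ?_ ?_ ?_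
        · exact NiceShape.box_le.2 ⟨by dsimp +zetaDelta only; omega, by dsimp +zetaDelta only; omega⟩
        · intro h
          have := congrArg (fun z : ↥(shiftCells l lam) => (Subtype.val z).1) h
          dsimp +zetaDelta only at this; omega
        · intro h
          rcases h with h' | h'
          · exact hXIn ⟨hxmem, h'⟩
          · rw [Set.mem_singleton_iff] at h'
            have := congrArg (fun z : ↥(shiftCells l lam) => (Subtype.val z).2) h'
            dsimp +zetaDelta only at this; omega
    unfold Dfun
    rw [h1, h2, h3, h4]
    ring
  -- value of D at the north point
  have hqNval : ∀ hN : ((i - 1, j) : ℕ × ℕ) ∈ shiftCells l lam,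
      Dfun l lam I I' ⟨(i - 1, j), hN⟩ =
        (AAc (lam 1) (i - 1, j) - 1) * (if XI then 0 else 1) := by
    intro hN
    set qN : ↥(shiftCells l lam) := ⟨(i - 1, j), hN⟩ with hqNdef
    have hNm := hN
    rw [NiceShape.mem_shift] at hNm
    dsimp only at hNm
    have hi2 : 2 ≤ i := by omega
    have hqNp : qN ≤ p := NiceShape.box_le.2 ⟨by dsimp +zetaDelta only; omega, by dsimp +zetaDelta only; omega⟩
    have hqNnep : qN ≠ p := fun h => by
      have := congrArg (fun z : ↥(shiftCells l lam) => (Subtype.val z).1) h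
      dsimp +zetaDelta only at this; omega
    have hqNI : qN ∈ I.1 := by
      rcases hadd qN hqNp with h' | h'
      · exact absurd h' hqNnep
      · exact h'
    have h1 : Tplus qN I = 0 := Tplus_zero_of_mem I hqNI
    have h2 : Tplus qN I' = 0 := Tplus_zero_of_mem I' (Set.mem_union_left _ hqNI)
    have h4 : Tminus qN I' = 0 :=
      Tminus_zero_of_above I' hqNp (fun h => hqNnep h.symm) hpI'
    have h3 : Tminus qN I = (if XI then 0 else 1) := by
      by_cases hXIh : XI
      · rw [if_pos hXIh]
        obtain ⟨hx, hxI⟩ := hXIh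
        refine Tminus_zero_of_above I (s := ⟨(i - 1, j + 1), hx⟩)
          (NiceShape.box_le.2 ⟨by dsimp +zetaDelta only; omega, by dsimp +zetaDelta only; omega⟩) ?_ hxI
        intro h
        have := congrArg (fun z : ↥(shiftCells l lam) => (Subtype.val z).2) h
        dsimp +zetaDelta only at this; omega
      · rw [if_neg hXIh]
        refine Tminus_one I hqNI ?_
        intro s hs'
        obtain ⟨hs1', hs2'⟩ := NiceShape.box_le.1 hs'
        dsimp +zetaDelta only at hs1' hs2'
        by_cases ha : i ≤ s.val.1
        · exact Or.inr fun hsI => hp (I.2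
            (NiceShape.box_le.2 ⟨by dsimp +zetaDelta only; omega, by dsimp +zetaDelta only; omega⟩) hsI)
        · have ha' : s.val.1 = i - 1 := by omega
          by_cases hb : s.val.2 = j
          · refine Or.inl (Subtype.ext ?_)
            have hsv : s.val = (s.val.1, s.val.2) := rfl
            rw [hsv, ha', hb]
          · refine Or.inr fun hsI => ?_
            have hs3 := s.2
            rw [NiceShape.mem_shift] at hs3
            have hlams : s.val.2 < lam (i - 1) + (i - 1) := by
              have := hs3.2.2.2
              rw [ha'] at this
              exact this
            have hxmem : ((i - 1, j + 1) : ℕ × ℕ) ∈ shiftCells l lam := by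
              rw [NiceShape.mem_shift]
              dsimp only
              omega
            exact hXIh ⟨hxmem, I.2
              (NiceShape.box_le.2 ⟨by dsimp +zetaDelta only; omega, by dsimp +zetaDelta only; omega⟩) hsI⟩
    unfold Dfun
    rw [h1, h2, h3, h4]
    ring
  -- value of D at the south point
  have hqSval : ∀ hSm : ((i + 1, j) : ℕ × ℕ) ∈ shiftCells l lam,
      Dfun l lam I I' ⟨(i + 1, j), hSm⟩ =
        AAc (lam 1) (i + 1, j) * (if j = i + 1 ∨ YI then 1 else 0) := by
    intro hSm
    set qS : ↥(shiftCells l lam) := ⟨(i + 1, j), hSm⟩ with hqSdef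
    have hSmm := hSm
    rw [NiceShape.mem_shift] at hSmm
    dsimp only at hSmm
    have hpqS : p ≤ qS := NiceShape.box_le.2 ⟨by dsimp +zetaDelta only; omega, by dsimp +zetaDelta only; omega⟩
    have hpneqS : p ≠ qS := fun h => by
      have := congrArg (fun z : ↥(shiftCells l lam) => (Subtype.val z).1) h
      dsimp +zetaDelta only at this; omega
    have hqSnI : qS ∉ I.1 := fun h => hp (I.2 hpqS h)
    have hqSnI' : qS ∉ I'.1 := fun h => by
      rcases h with h' | h'
      · exact hqSnI h'
      · rw [Set.mem_singleton_iff] at h'; exact hpneqS h'.symm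
    have h1 : Tplus qS I = 0 := Tplus_zero_of_missing_below I hpqS hpneqS hp
    have h3 : Tminus qS I = 0 := Tminus_zero_of_notmem I hqSnI
    have h4 : Tminus qS I' = 0 := Tminus_zero_of_notmem I' hqSnI'
    have h2 : Tplus qS I' = (if j = i + 1 ∨ YI then 1 else 0) := by
      by_cases hc : j = i + 1 ∨ YI
      · rw [if_pos hc]
        refine Tplus_one I' hqSnI' ?_
        intro s hs'
        obtain ⟨hs1', hs2'⟩ := NiceShape.box_le.1 hs'
        dsimp +zetaDelta only at hs1' hs2'
        by_cases ha : s.val.1 ≤ i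
        · have hsp : s ≤ p := NiceShape.box_le.2 ⟨by dsimp +zetaDelta only; omega, by dsimp +zetaDelta only; omega⟩
          rcases hadd s hsp with h' | h'
          · exact Or.inr (Set.mem_union_right _ (Set.mem_singleton_iff.2 h'))
          · exact Or.inr (Set.mem_union_left _ h')
        · have ha2 : s.val.1 = i + 1 := by omega
          have hs3 := s.2
          rw [NiceShape.mem_shift] at hs3
          by_cases hb : s.val.2 = j
          · refine Or.inl (Subtype.ext ?_)
            have hsv : s.val = (s.val.1, s.val.2) := rfl
            rw [hsv, ha2, hb]
          · have hb2 : s.val.2 ≤ j - 1 := by omega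
            have hj2 : i + 2 ≤ j := by
              have := hs3.2.2.1
              omega
            rcases hc with hc1 | hc2
            · omega
            · obtain ⟨hy, hyI⟩ := hc2
              have hsy : s ≤ (⟨(i + 1, j - 1), hy⟩ : ↥(shiftCells l lam)) :=
                NiceShape.box_le.2 ⟨by dsimp +zetaDelta only; omega, by dsimp +zetaDelta only; omega⟩
              exact Or.inr (Set.mem_union_left _ (I.2 hsy hyI))
      · rw [if_neg hc]
        push_neg at hc
        obtain ⟨hjne, hYIn⟩ := hc
        have hj2 : i + 2 ≤ j := by omega
        have hymem : ((i + 1, j - 1) : ℕ × ℕ) ∈ shiftCells l lam := by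
          rw [NiceShape.mem_shift]
          dsimp only
          omega
        refine Tplus_zero_of_missing_below I'
          (s := ⟨(i + 1, j - 1), hymem⟩) ?_ ?_ ?_
        · exact NiceShape.box_le.2 ⟨by dsimp +zetaDelta only; omega, by dsimp +zetaDelta only; omega⟩
        · intro h
          have := congrArg (fun z : ↥(shiftCells l lam) => (Subtype.val z).2) h
          dsimp +zetaDelta only at this; omega
        · intro h
          rcases h with h' | h'
          · exact hYIn ⟨hymem, h'⟩
          · rw [Set.mem_singleton_iff] at h'
            have := congrArg (fun z : ↥(shiftCells l lam) => (Subtype.val z).1) h'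
            dsimp +zetaDelta only at this; omega
    unfold Dfun
    rw [h1, h2, h3, h4]
    ring
  -- value of D at the west point
  have hqWval : ∀ hW : ((i, j - 1) : ℕ × ℕ) ∈ shiftCells l lam,
      Dfun l lam I I' ⟨(i, j - 1), hW⟩ =
        (AAc (lam 1) (i, j - 1) - 1) * (if YI then 0 else 1) := by
    intro hW
    set qW : ↥(shiftCells l lam) := ⟨(i, j - 1), hW⟩ with hqWdef
    have hWm := hW
    rw [NiceShape.mem_shift] at hWm
    dsimp only at hWm
    have hj2 : i + 1 ≤ j := by omega
    have hqWp : qW ≤ p := NiceShape.box_le.2 ⟨by dsimp +zetaDelta only; omega, by dsimp +zetaDelta only; omega⟩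
    have hqWnep : qW ≠ p := fun h => by
      have := congrArg (fun z : ↥(shiftCells l lam) => (Subtype.val z).2) h
      dsimp +zetaDelta only at this; omega
    have hqWI : qW ∈ I.1 := by
      rcases hadd qW hqWp with h' | h'
      · exact absurd h' hqWnep
      · exact h'
    have h1 : Tplus qW I = 0 := Tplus_zero_of_mem I hqWI
    have h2 : Tplus qW I' = 0 := Tplus_zero_of_mem I' (Set.mem_union_left _ hqWI)
    have h4 : Tminus qW I' = 0 :=
      Tminus_zero_of_above I' hqWp (fun h => hqWnep h.symm) hpI'
    have h3 : Tminus qW I = (if YI then 0 else 1) := by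
      by_cases hYIh : YI
      · rw [if_pos hYIh]
        obtain ⟨hy, hyI⟩ := hYIh
        refine Tminus_zero_of_above I (s := ⟨(i + 1, j - 1), hy⟩)
          (NiceShape.box_le.2 ⟨by dsimp +zetaDelta only; omega, by dsimp +zetaDelta only; omega⟩) ?_ hyI
        intro h
        have := congrArg (fun z : ↥(shiftCells l lam) => (Subtype.val z).1) h
        dsimp +zetaDelta only at this; omega
      · rw [if_neg hYIh]
        refine Tminus_one I hqWI ?_
        intro s hs'
        obtain ⟨hs1', hs2'⟩ := NiceShape.box_le.1 hs'
        dsimp +zetaDelta only at hs1' hs2'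
        by_cases hb : j ≤ s.val.2
        · exact Or.inr fun hsI => hp (I.2
            (NiceShape.box_le.2 ⟨by dsimp +zetaDelta only; omega, by dsimp +zetaDelta only; omega⟩) hsI)
        · have hb2 : s.val.2 = j - 1 := by omega
          by_cases ha : s.val.1 = i
          · refine Or.inl (Subtype.ext ?_)
            have hsv : s.val = (s.val.1, s.val.2) := rfl
            rw [hsv, ha, hb2]
          · refine Or.inr fun hsI => ?_
            have hs3 := s.2
            rw [NiceShape.mem_shift] at hs3
            have hmono2 : lam s.val.1 + s.val.1 ≤ lam (i + 1) + (i + 1) :=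
              hs.mono (i + 1) s.val.1 (by omega) (by omega) hs3.2.1
            have hymem : ((i + 1, j - 1) : ℕ × ℕ) ∈ shiftCells l lam := by
              rw [NiceShape.mem_shift]
              dsimp only
              omega
            exact hYIh ⟨hymem, I.2
              (NiceShape.box_le.2 ⟨by dsimp +zetaDelta only; omega, by dsimp +zetaDelta only; omega⟩) hsI⟩
    unfold Dfun
    rw [h1, h2, h3, h4]
    ring
  -- cast helpers
  have hcasti : 1 ≤ i := hi1
  have hciR : ((i - 1 : ℕ) : ℝ) = (i : ℝ) - 1 := by
    rw [Nat.cast_sub hi1]; norm_num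
  -- value at the center point
  have hPP : (if h : ((i, j) : ℕ × ℕ) ∈ shiftCells l lam
      then Dfun l lam I I' ⟨(i, j), h⟩ else 0) = 1 - 2 * AAc (lam 1) (i, j) := by
    rw [dif_pos hpmem]
    have hqp : (⟨(i, j), hpmem⟩ : ↥(shiftCells l lam)) = p := rfl
    rw [hqp]
    have h1 : Tplus p I = 1 := Tplus_one I hp hadd
    have h2 : Tplus p I' = 0 := Tplus_zero_of_mem I' hpI'
    have h3 : Tminus p I = 0 := Tminus_zero_of_notmem I hp
    have h4 : Tminus p I' = 1 := by
      refine Tminus_one I' hpI' ?_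
      intro s hs'
      by_cases hsp : s = p
      · exact Or.inl hsp
      · refine Or.inr fun hsI' => ?_
        rcases hsI' with h' | h'
        · exact hp (I.2 hs' h')
        · exact hsp h'
    unfold Dfun
    rw [h1, h2, h3, h4]
    ring
  -- north-side sum
  have hNS : (if h : ((i, j + 1) : ℕ × ℕ) ∈ shiftCells l lam
        then Dfun l lam I I' ⟨(i, j + 1), h⟩ else 0) +
      (if h : ((i - 1, j) : ℕ × ℕ) ∈ shiftCells l lam
        then Dfun l lam I I' ⟨(i - 1, j), h⟩ else 0) =
      ((lam 1 : ℝ) + 1 - i - j) / 2 := by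
    have hAE : AAc (lam 1) (i, j + 1) = ((lam 1 : ℝ) + 1 - i - j) / 2 := by
      rw [AAc_off (lam 1) (by omega : i ≠ j + 1)]
      push_cast
      ring
    by_cases hE : ((i, j + 1) : ℕ × ℕ) ∈ shiftCells l lam
    · rw [dif_pos hE, hqEac hE]
      by_cases hi1' : i = 1
      · have hNmem : ((i - 1, j) : ℕ × ℕ) ∉ shiftCells l lam := by
          rw [NiceShape.mem_shift]
          dsimp only
          omega
        rw [dif_neg hNmem, if_pos (Or.inl hi1'), hAE]
        have : (i : ℝ) = 1 := by exact_mod_cast congrArg (Nat.cast : ℕ → ℝ) hi1'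
        push_cast
        linarith
      · have hi2 : 2 ≤ i := by omega
        have hEm := hE
        rw [NiceShape.mem_shift] at hEm
        dsimp only at hEm
        have hmono : lam i + i ≤ lam (i - 1) + (i - 1) :=
          hs.mono (i - 1) i (by omega) (by omega) hil
        have hNmem : ((i - 1, j) : ℕ × ℕ) ∈ shiftCells l lam := by
          rw [NiceShape.mem_shift]
          dsimp only
          omega
        rw [dif_pos hNmem, hqNval hNmem]
        have hAN : AAc (lam 1) (i - 1, j) = ((lam 1 : ℝ) + 2 - ((i : ℝ) - 1) - j) / 2 := by
          rw [AAc_off (lam 1) (by omega : i - 1 ≠ j), hciR]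
        by_cases hXIh : XI
        · rw [if_pos (Or.inr hXIh), if_pos hXIh, hAE, hAN]
          push_cast
          ring
        · rw [if_neg (by tauto : ¬(i = 1 ∨ XI)), if_neg hXIh, hAE, hAN]
          push_cast
          ring
    · have hrow : j + 1 = lam i + i := by
        rw [NiceShape.mem_shift] at hE
        dsimp only at hE
        omega
      rw [dif_neg hE]
      by_cases hi1' : i = 1
      · have hNmem : ((i - 1, j) : ℕ × ℕ) ∉ shiftCells l lam := by
          rw [NiceShape.mem_shift]
          dsimp only
          omega
        rw [dif_neg hNmem]
        have h1 : (i : ℝ) = 1 := by exact_mod_cast congrArg (Nat.cast : ℕ → ℝ) hi1'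
        have h2 : (j : ℝ) = (lam 1 : ℕ) := by
          have : j = lam 1 := by rw [hi1'] at hrow; omega
          exact_mod_cast congrArg (Nat.cast : ℕ → ℝ) this
        linarith
      · have hi2 : 2 ≤ i := by omega
        have hmono : lam i + i ≤ lam (i - 1) + (i - 1) :=
          hs.mono (i - 1) i (by omega) (by omega) hil
        have hNmem : ((i - 1, j) : ℕ × ℕ) ∈ shiftCells l lam := by
          rw [NiceShape.mem_shift]
          dsimp only
          omega
        rw [dif_pos hNmem, hqNval hNmem]
        have hAN : AAc (lam 1) (i - 1, j) = ((lam 1 : ℝ) + 2 - ((i : ℝ) - 1) - j) / 2 := by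
          rw [AAc_off (lam 1) (by omega : i - 1 ≠ j), hciR]
        by_cases hXIh : XI
        · -- outward corner forced on the anti-diagonal
          obtain ⟨hx, -⟩ := id hXIh
          have hxm := hx
          rw [NiceShape.mem_shift] at hxm
          dsimp only at hxm
          have hcornercond : lam i + 2 ≤ lam (i - 1) := by omega
          have hcor := hs.hcorner i hi2 hil hcornercond
          have hd : i + j = lam 1 + 1 := by omega
          have hdr : (i : ℝ) + (j : ℝ) = (lam 1 : ℕ) + 1 := by exact_mod_cast hd
          rw [if_pos hXIh]
          have : (AAc (lam 1) (i - 1, j) - 1) * 0 = 0 := by ring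
          rw [this]
          linarith
        · rw [if_neg hXIh, hAN]
          push_cast
          ring
  -- south-side sum
  have hSS : (if h : ((i + 1, j) : ℕ × ℕ) ∈ shiftCells l lam
        then Dfun l lam I I' ⟨(i + 1, j), h⟩ else 0) +
      (if h : ((i, j - 1) : ℕ × ℕ) ∈ shiftCells l lam
        then Dfun l lam I I' ⟨(i, j - 1), h⟩ else 0) =
      if i = j then 0 else ((lam 1 : ℝ) + 1 - i - j) / 2 := by
    by_cases hij' : i = j
    · have hSmem : ((i + 1, j) : ℕ × ℕ) ∉ shiftCells l lam := by
        rw [NiceShape.mem_shift]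
        dsimp only
        omega
      have hWmem : ((i, j - 1) : ℕ × ℕ) ∉ shiftCells l lam := by
        rw [NiceShape.mem_shift]
        dsimp only
        omega
      rw [dif_neg hSmem, dif_neg hWmem, if_pos hij']
      norm_num
    · rw [if_neg hij']
      have hij2 : i + 1 ≤ j := by omega
      have hWmem : ((i, j - 1) : ℕ × ℕ) ∈ shiftCells l lam := by
        rw [NiceShape.mem_shift]
        dsimp only
        omega
      rw [dif_pos hWmem, hqWval hWmem]
      by_cases hj1 : j = i + 1
      · -- south point is the next diagonal box
        have hYn : ¬ YI := by
          rintro ⟨hy, -⟩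
          rw [NiceShape.mem_shift] at hy
          dsimp only at hy
          omega
        have hil2 : i < l := by
          rcases eq_or_lt_of_le hil with h | h
          · exfalso
            have : lam i = 1 := h ▸ hs.hlast
            omega
          · exact h
        have hSmem : ((i + 1, j) : ℕ × ℕ) ∈ shiftCells l lam := by
          rw [NiceShape.mem_shift]
          dsimp only
          have := hs.hpos (i + 1) (by omega) (by omega)
          omega
        rw [dif_pos hSmem, hqSval hSmem, if_pos (Or.inl hj1), if_neg hYn]
        have hAW : AAc (lam 1) (i, j - 1) = ((lam 1 : ℝ) + 3 - 2 * i) / 4 := by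
          have : ((i, j - 1) : ℕ × ℕ) = (i, i) := by
            rw [Prod.mk.injEq]; omega
          rw [this, AAc_diag]
        have hAS : AAc (lam 1) (i + 1, j) = ((lam 1 : ℝ) + 3 - 2 * ((i : ℝ) + 1)) / 4 := by
          have : ((i + 1, j) : ℕ × ℕ) = (i + 1, i + 1) := by
            rw [Prod.mk.injEq]; omega
          rw [this, AAc_diag]
          push_cast
          ring
        rw [hAW, hAS]
        have hjr : (j : ℝ) = (i : ℝ) + 1 := by exact_mod_cast congrArg (Nat.cast : ℕ → ℝ) hj1
        rw [hjr]
        ring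
      · have hj3 : i + 2 ≤ j := by omega
        have hAW : AAc (lam 1) (i, j - 1) = ((lam 1 : ℝ) + 2 - i - ((j : ℝ) - 1)) / 2 := by
          rw [AAc_off (lam 1) (by omega : i ≠ j - 1)]
          rw [Nat.cast_sub (by omega : 1 ≤ j)]
          norm_num
        by_cases hSm : ((i + 1, j) : ℕ × ℕ) ∈ shiftCells l lam
        · rw [dif_pos hSm, hqSval hSm]
          have hAS : AAc (lam 1) (i + 1, j) = ((lam 1 : ℝ) + 2 - ((i : ℝ) + 1) - j) / 2 := by
            rw [AAc_off (lam 1) (by omega : i + 1 ≠ j)]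
            push_cast
            ring
          by_cases hYIh : YI
          · rw [if_pos (Or.inr hYIh), if_pos hYIh, hAS]
            push_cast
            ring
          · rw [if_neg (by tauto : ¬(j = i + 1 ∨ YI)), if_neg hYIh, hAW]
            push_cast
            ring
        · rw [dif_neg hSm]
          by_cases hYIh : YI
          · obtain ⟨hy, -⟩ := id hYIh
            have hym := hy
            rw [NiceShape.mem_shift] at hym
            dsimp only at hym
            have hSm' := hSm
            rw [NiceShape.mem_shift] at hSm'
            dsimp only at hSm'
            have hjval : j = lam (i + 1) + (i + 1) := by omega
            have hcornercond : lam (i + 1) + 2 ≤ lam ((i + 1) - 1) := by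
              have : (i + 1) - 1 = i := by omega
              rw [this]
              omega
            have hcor := hs.hcorner (i + 1) (by omega) hym.2.1 hcornercond
            have hd : i + j = lam 1 + 1 := by omega
            have hdr : (i : ℝ) + (j : ℝ) = (lam 1 : ℕ) + 1 := by exact_mod_cast hd
            rw [if_pos hYIh]
            have hz : (AAc (lam 1) (i, j - 1) - 1) * 0 = 0 := by ring
            rw [hz]
            linarith
          · rw [if_neg hYIh, hAW]
            push_cast
            ring
  -- assemble
  have hzero : ∑ q, Dfun l lam I I' q = 0 := by
    rw [hsum]
    by_cases hij' : i = j
    · rw [if_pos hij'] at hSS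
      have hAP : AAc (lam 1) (i, j) = ((lam 1 : ℝ) + 3 - 2 * i) / 4 := by
        have : ((i, j) : ℕ × ℕ) = (i, i) := by rw [Prod.mk.injEq]; omega
        rw [this, AAc_diag]
      rw [hAP] at hPP
      have hjr : (j : ℝ) = (i : ℝ) := by
        exact_mod_cast congrArg (Nat.cast : ℕ → ℝ) hij'.symm
      rw [hjr] at hNS
      linarith
    · rw [if_neg hij'] at hSS
      rw [AAc_off (lam 1) hij'] at hPP
      linarith
  linarith [hG, hzero]




lemma Gstat_empty (hs : NiceShape l lam) (I : OIdeal ↥(shiftCells l lam)) (hI : I.1 = ∅) :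
    Gstat l lam I = ((lam 1 : ℝ) + 1) / 4 := by
  classical
  have hfin : Finite ↥(shiftCells l lam) := hs.shift_finite.to_subtype
  letI : Fintype ↥(shiftCells l lam) := Fintype.ofFinite _
  have h11 : ((1, 1) : ℕ × ℕ) ∈ shiftCells l lam := by
    rw [NiceShape.mem_shift]
    have := hs.hpos 1 le_rfl hs.hl
    exact ⟨le_rfl, hs.hl, le_rfl, by dsimp only; omega⟩
  set q0 : ↥(shiftCells l lam) := ⟨(1, 1), h11⟩ with hq0def
  have hTm : ∀ q, Tminus q I = 0 := fun q =>
    Tminus_zero_of_notmem I (by rw [hI]; exact Set.notMem_empty _)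
  have hTp : ∀ q : ↥(shiftCells l lam), Tplus q I = if q = q0 then 1 else 0 := by
    intro q
    by_cases hq : q = q0
    · rw [if_pos hq, hq]
      refine Tplus_one I (by rw [hI]; exact Set.notMem_empty _) ?_
      intro s hs'
      obtain ⟨h1', h2'⟩ := NiceShape.box_le.1 hs'
      dsimp +zetaDelta only at h1' h2'
      have hs3 := s.2
      rw [NiceShape.mem_shift] at hs3
      refine Or.inl (Subtype.ext ?_)
      have hsv : s.val = (s.val.1, s.val.2) := rfl
      have ha : s.val.1 = 1 := by omega
      have hb : s.val.2 = 1 := by omega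
      rw [hsv, ha, hb]
    · rw [if_neg hq]
      have hq2 := q.2
      rw [NiceShape.mem_shift] at hq2
      refine Tplus_zero_of_missing_below I (s := q0) ?_ (fun h => hq h.symm)
        (by rw [hI]; exact Set.notMem_empty _)
      exact NiceShape.box_le.2 ⟨by dsimp +zetaDelta only; omega, by dsimp +zetaDelta only; omega⟩
  unfold Gstat
  rw [finsum_eq_sum_of_fintype]
  have hstep : ∀ q : ↥(shiftCells l lam),
      AAc (lam 1) q.val * Tplus q I + (1 - AAc (lam 1) q.val) * Tminus q I =
        if q = q0 then AAc (lam 1) q.val else 0 := by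
    intro q
    rw [hTm q, hTp q]
    by_cases hq : q = q0
    · rw [if_pos hq, if_pos hq]; ring
    · rw [if_neg hq, if_neg hq]; ring
  rw [Finset.sum_congr rfl fun q _ => hstep q, Finset.sum_ite_eq' Finset.univ q0]
  rw [if_pos (Finset.mem_univ _)]
  rw [show (q0.val : ℕ × ℕ) = (1, 1) from rfl, AAc_diag]
  push_cast
  ring

lemma Gstat_const (hs : NiceShape l lam) (I : OIdeal ↥(shiftCells l lam)) :
    Gstat l lam I = ((lam 1 : ℝ) + 1) / 4 := by
  classical
  have hfin : Finite ↥(shiftCells l lam) := hs.shift_finite.to_subtype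
  suffices H : ∀ N, ∀ I : OIdeal ↥(shiftCells l lam), I.1.ncard = N →
      Gstat l lam I = ((lam 1 : ℝ) + 1) / 4 from H _ I rfl
  intro N
  induction N using Nat.strong_induction_on with
  | _ N ih =>
    intro I hN
    by_cases hemp : I.1 = ∅
    · exact Gstat_empty hs I hemp
    · obtain ⟨q, hqI, hqmax⟩ := Set.Finite.exists_maximalFor id I.1 (Set.toFinite _)
        (Set.nonempty_iff_ne_empty.2 hemp)
      have hlowJ : IsLowerSet (I.1 \ {q}) := by
        intro a b hba ha
        refine ⟨I.2 hba ha.1, ?_⟩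
        rw [Set.mem_singleton_iff]
        intro hbq
        subst hbq
        have := le_antisymm hba (hqmax ha.1 hba)
        exact ha.2 (Set.mem_singleton_iff.2 this.symm)
      set J : OIdeal ↥(shiftCells l lam) := ⟨I.1 \ {q}, hlowJ⟩ with hJdef
      have hqJ : q ∉ J.1 := fun h => h.2 rfl
      have hUnion : J.1 ∪ {q} = I.1 := by
        ext a
        simp only [Set.mem_union, Set.mem_diff, Set.mem_singleton_iff]
        constructor
        · rintro (⟨h, _⟩ | h)
          · exact h
          · exact h ▸ hqI
        · intro h
          by_cases ha : a = q
          · exact Or.inr ha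
          · exact Or.inl ⟨h, ha⟩
      have hlow' : IsLowerSet (J.1 ∪ {q}) := hUnion ▸ I.2
      have hIJ : I = ⟨J.1 ∪ {q}, hlow'⟩ := Subtype.ext hUnion.symm
      have hcard : J.1.ncard < N := by
        rw [← hN]
        exact Set.ncard_diff_singleton_lt_of_mem hqI (Set.toFinite _)
      calc Gstat l lam I = Gstat l lam ⟨J.1 ∪ {q}, hlow'⟩ := by rw [← hIJ]
        _ = Gstat l lam J := Gstep hs J q hqJ hlow'
        _ = _ := ih _ hcard J rfl

lemma expect_ddeg (hs : NiceShape l lam) (μ : OIdeal ↥(shiftCells l lam) → ℝ)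
    (hprob : IsProbDist μ) (hts : ToggleSymmetric μ) :
    expect μ ddeg = ((lam 1 : ℝ) + 1) / 4 := by
  classical
  have hfin : Finite ↥(shiftCells l lam) := hs.shift_finite.to_subtype
  letI : Fintype ↥(shiftCells l lam) := Fintype.ofFinite _
  letI : Fintype (OIdeal ↥(shiftCells l lam)) := Fintype.ofFinite _
  have h1 : expect μ ddeg =
      ∑ q : ↥(shiftCells l lam), ∑ I : OIdeal ↥(shiftCells l lam), μ I * Tminus q I := by
    unfold expect
    rw [finsum_eq_sum_of_fintype]
    calc ∑ I : OIdeal ↥(shiftCells l lam), μ I * ddeg I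
        = ∑ I : OIdeal ↥(shiftCells l lam), ∑ q : ↥(shiftCells l lam), μ I * Tminus q I := by
          refine Finset.sum_congr rfl fun I _ => ?_
          rw [ddeg_oideal I, finsum_eq_sum_of_fintype, Finset.mul_sum]
      _ = _ := Finset.sum_comm
  have hT : ∀ q : ↥(shiftCells l lam),
      ∑ I : OIdeal ↥(shiftCells l lam), μ I * Tplus q I =
        ∑ I : OIdeal ↥(shiftCells l lam), μ I * Tminus q I := by
    intro q
    have h := hts q
    unfold expect at h
    rw [finsum_eq_sum_of_fintype, finsum_eq_sum_of_fintype] at h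
    exact h
  have h2 : ∑ q : ↥(shiftCells l lam), ∑ I : OIdeal ↥(shiftCells l lam), μ I * Tminus q I
      = ∑ I : OIdeal ↥(shiftCells l lam), μ I * Gstat l lam I := by
    calc ∑ q : ↥(shiftCells l lam), ∑ I : OIdeal ↥(shiftCells l lam), μ I * Tminus q I
        = ∑ q : ↥(shiftCells l lam),
            (AAc (lam 1) q.val * ∑ I : OIdeal ↥(shiftCells l lam), μ I * Tplus q I
             + (1 - AAc (lam 1) q.val) * ∑ I : OIdeal ↥(shiftCells l lam), μ I * Tminus q I) := by
          refine Finset.sum_congr rfl fun q _ => ?_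
          rw [hT q]
          ring
      _ = ∑ q : ↥(shiftCells l lam), ∑ I : OIdeal ↥(shiftCells l lam),
            μ I * (AAc (lam 1) q.val * Tplus q I + (1 - AAc (lam 1) q.val) * Tminus q I) := by
          refine Finset.sum_congr rfl fun q _ => ?_
          rw [Finset.mul_sum, Finset.mul_sum, ← Finset.sum_add_distrib]
          refine Finset.sum_congr rfl fun I _ => ?_
          ring
      _ = ∑ I : OIdeal ↥(shiftCells l lam), ∑ q : ↥(shiftCells l lam),
            μ I * (AAc (lam 1) q.val * Tplus q I + (1 - AAc (lam 1) q.val) * Tminus q I) :=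
          Finset.sum_comm
      _ = ∑ I : OIdeal ↥(shiftCells l lam), μ I * Gstat l lam I := by
          refine Finset.sum_congr rfl fun I _ => ?_
          rw [Gstat, finsum_eq_sum_of_fintype, Finset.mul_sum]
  have h3 : ∑ I : OIdeal ↥(shiftCells l lam), μ I * Gstat l lam I = ((lam 1 : ℝ) + 1) / 4 := by
    have hG : ∀ I : OIdeal ↥(shiftCells l lam),
        μ I * Gstat l lam I = μ I * (((lam 1 : ℝ) + 1) / 4) := fun I => by
      rw [Gstat_const hs I]
    rw [Finset.sum_congr rfl fun I _ => hG I, ← Finset.sum_mul]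
    have hsummu : ∑ I : OIdeal ↥(shiftCells l lam), μ I = 1 := by
      have h := hprob.2
      rw [finsum_eq_sum_of_fintype] at h
      exact h
    rw [hsummu, one_mul]
  rw [h1, h2, h3]

end Core

/-- Theorem `thm:shiftyounglatcde`(1).  Let `0 ≤ k < n` and let `ν` be a
(not necessarily strict) partition which, as a straight shape, is balanced with height and
width both equal to `k`.  Set `λ := δ_n + ν`.  Then the distributive lattice
`[∅, λ]_shift = J(P_λ^shift)` is tCDE: `E(μ; ddeg) = (n + 1 + k)/4` for every toggle-symmetric
probability distribution `μ`; in particular its edge density is `(n + 1 + k)/4`. -/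
theorem statement12 (n k : ℕ) (hkn : k < n) (nu : ℕ → ℕ) (hbal : BalancedSquare k nu)
    (lam : ℕ → ℕ)
    (hlam : ∀ i, 1 ≤ i → i ≤ n → lam i = (n + 1 - i) + nu i)
    (hlam0 : ∀ i, n < i → lam i = 0) :
    (∀ μ : OIdeal ↥(shiftCells n lam) → ℝ, IsProbDist μ → ToggleSymmetric μ →
        expect μ ddeg = ((n : ℝ) + 1 + (k : ℝ)) / 4) ∧
      expect (uni (OIdeal ↥(shiftCells n lam))) ddeg = ((n : ℝ) + 1 + (k : ℝ)) / 4 := by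
  have hs : NiceShape n lam := by
    obtain ⟨hmono, hpos', hzero, hk, hbalcorner⟩ := hbal
    refine ⟨by omega, ?_, ?_, ?_, ?_⟩
    · intro a h1 h2
      rw [hlam a h1 h2]
      omega
    · intro a h1 h2
      rw [hlam a h1 (by omega), hlam (a + 1) (by omega) (by omega)]
      have := hmono a h1
      omega
    · rw [hlam n (by omega) le_rfl, hzero n hkn]
      omega
    · intro a h2 hle hcornercond
      rw [hlam 1 le_rfl (by omega), hk]
      rw [hlam a (by omega) hle] at hcornercond ⊢
      rw [hlam (a - 1) (by omega) (by omega)] at hcornercond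
      have hcc : nu a + 1 ≤ nu (a - 1) := by omega
      by_cases hak : a ≤ k
      · have ha1 : a - 1 + 1 = a := by omega
        have hb := hbalcorner (a - 1) (by omega) (by omega) (by rw [ha1]; omega)
        rw [ha1] at hb
        omega
      · have hnua : nu a = 0 := hzero a (by omega)
        have hk1 : a - 1 ≤ k := by
          by_contra hc
          have := hzero (a - 1) (by omega)
          omega
        omega
  have hlam1 : lam 1 = n + k := by
    rw [hlam 1 le_rfl (by omega), hbal.2.2.2.1]
    omega
  have hfin : Finite ↥(shiftCells n lam) := hs.shift_finite.to_subtype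
  have hval : ((lam 1 : ℕ) : ℝ) + 1 = (n : ℝ) + 1 + (k : ℝ) := by
    rw [hlam1]
    push_cast
    ring
  constructor
  · intro μ hprob hts
    rw [expect_ddeg hs μ hprob hts]
    rw [hval]
  · haveI : Nonempty (OIdeal ↥(shiftCells n lam)) := ⟨⟨∅, isLowerSet_empty⟩⟩
    rw [expect_ddeg hs (uni _) isProbDist_uni toggleSymmetric_uni]
    rw [hval]


end CDEPaper
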